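/- arXiv:2010.11116 — 2 statements merged into one kernel-verified Lean document; each statement's English description precedes it below -/
import Mathlib

section
/- If C ⊆ {0,1}^N is a B_h sequence and every string in C is a Dyck path (i.e., every codeword has weight N/2 and every proper prefix of length i has weight at least floor(i/2)+1), then C is an h-MC code: for any two distinct subsets S, T of C each of size at most h, the multiset union of prefix-suffix composition multisets over S differs from that over T. -/
open Finset

def wtB {m : ℕ} (s : Fin m → Bool) : ℕ := ∑ i, if s i then 1 else 0

def onesPref {n : ℕ} (s : Fin n → Bool) (i : ℕ) : ℕ :=
  ∑ j ∈ Finset.univ.filter (fun j : Fin n => (j : ℕ) < i), if s j then 1 else 0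

def onesSuff {n : ℕ} (s : Fin n → Bool) (i : ℕ) : ℕ :=
  ∑ j ∈ Finset.univ.filter (fun j : Fin n => n - i ≤ (j : ℕ)), if s j then 1 else 0

/-- Prefix composition multiset: compositions (number of 0s, number of 1s) of all
prefixes of lengths 1,...,n. -/
def Mp {n : ℕ} (s : Fin n → Bool) : Multiset (ℕ × ℕ) :=
  (Multiset.range n).map (fun i => (i + 1 - onesPref s (i + 1), onesPref s (i + 1)))

/-- Suffix composition multiset. -/
def Msf {n : ℕ} (s : Fin n → Bool) : Multiset (ℕ × ℕ) :=
  (Multiset.range n).map (fun i => (i + 1 - onesSuff s (i + 1), onesSuff s (i + 1)))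

/-- Prefix-suffix composition multiset M(s). -/
def Mps {n : ℕ} (s : Fin n → Bool) : Multiset (ℕ × ℕ) := Mp s + Msf s

/-- C is a B_h sequence: distinct subsets of size ≤ h have distinct coordinatewise
integer sums. -/
def IsBh {N : ℕ} (C : Finset (Fin N → Bool)) (h : ℕ) : Prop :=
  ∀ S T : Finset (Fin N → Bool), S ⊆ C → T ⊆ C → S.card ≤ h → T.card ≤ h →
    ((fun i : Fin N => ∑ x ∈ S, if x i then (1 : ℕ) else 0) =
      fun i : Fin N => ∑ x ∈ T, if x i then (1 : ℕ) else 0) → S = T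

/-- s is a Dyck path: weight N/2 and every prefix of length i ∈ [N-1] has weight
at least ⌊i/2⌋ + 1. -/
def IsDyck {N : ℕ} (s : Fin N → Bool) : Prop :=
  onesPref s N = N / 2 ∧ ∀ i : ℕ, 1 ≤ i → i ≤ N - 1 → i / 2 + 1 ≤ onesPref s i

/- ------------------ auxiliary lemmas ------------------ -/

lemma onesPref_le {n : ℕ} (s : Fin n → Bool) (i : ℕ) : onesPref s i ≤ i := by
  unfold onesPref
  calc ∑ j ∈ Finset.univ.filter (fun j : Fin n => (j : ℕ) < i), (if s j then 1 else 0)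
      ≤ ∑ _j ∈ Finset.univ.filter (fun j : Fin n => (j : ℕ) < i), 1 := by
        apply Finset.sum_le_sum; intro j _; split <;> omega
    _ = (Finset.univ.filter (fun j : Fin n => (j : ℕ) < i)).card := by simp
    _ ≤ (Finset.range i).card := by
        refine Finset.card_le_card_of_injOn (fun j => (j : ℕ)) ?_ ?_
        · intro j hj; simp at hj ⊢; exact hj
        · intro a _ b _ hab; exact Fin.ext hab
    _ = i := by simp

lemma onesSuff_le {n : ℕ} (s : Fin n → Bool) (i : ℕ) : onesSuff s i ≤ i := by
  unfold onesSuff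
  calc ∑ j ∈ Finset.univ.filter (fun j : Fin n => n - i ≤ (j : ℕ)), (if s j then 1 else 0)
      ≤ ∑ _j ∈ Finset.univ.filter (fun j : Fin n => n - i ≤ (j : ℕ)), 1 := by
        apply Finset.sum_le_sum; intro j _; split <;> omega
    _ = (Finset.univ.filter (fun j : Fin n => n - i ≤ (j : ℕ))).card := by simp
    _ ≤ (Finset.Ico (n - i) n).card := by
        refine Finset.card_le_card_of_injOn (fun j => (j : ℕ)) ?_ ?_
        · intro j hj; simp only [Finset.mem_coe, Finset.mem_filter, Finset.mem_univ, true_and] at hj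
          simp only [Finset.mem_coe, Finset.mem_Ico]
          exact ⟨hj, j.2⟩
        · intro a _ b _ hab; exact Fin.ext hab
    _ ≤ i := by rw [Nat.card_Ico]; omega

lemma onesPref_zero {n : ℕ} (s : Fin n → Bool) : onesPref s 0 = 0 := by
  unfold onesPref
  rw [Finset.sum_eq_zero]
  intro j hj; simp at hj

lemma onesPref_top {n : ℕ} (s : Fin n → Bool) :
    onesPref s n = ∑ j, if s j then 1 else 0 := by
  unfold onesPref
  congr 1
  apply Finset.filter_true_of_mem
  intro j _; exact j.2

lemma onesSuff_add {n : ℕ} (s : Fin n → Bool) (i : ℕ) :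
    onesSuff s i + onesPref s (n - i) = onesPref s n := by
  rw [onesPref_top]
  unfold onesSuff onesPref
  have := Finset.sum_filter_add_sum_filter_not (Finset.univ : Finset (Fin n))
    (fun j : Fin n => n - i ≤ (j : ℕ)) (fun j => if s j then 1 else 0)
  rw [← this]
  congr 1
  apply Finset.sum_congr
  · apply Finset.filter_congr; intro j _; simp; omega
  · intros; rfl

lemma onesPref_succ {n : ℕ} (s : Fin n → Bool) (i : ℕ) (hi : i < n) :
    onesPref s (i + 1) = onesPref s i + (if s ⟨i, hi⟩ then 1 else 0) := by
  unfold onesPref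
  have hins : Finset.univ.filter (fun j : Fin n => (j : ℕ) < i + 1) =
      insert (⟨i, hi⟩ : Fin n) (Finset.univ.filter (fun j : Fin n => (j : ℕ) < i)) := by
    ext j
    simp [Finset.mem_insert, Fin.ext_iff]
    omega
  rw [hins, Finset.sum_insert (by simp)]
  ring

/-- half of prefix inequality: prefixes of lengths 1..n-1 have strictly more ones. -/
lemma dyck_pref {n : ℕ} {s : Fin n → Bool} (hD : IsDyck s) {i : ℕ}
    (h1 : 1 ≤ i) (h2 : i ≤ n - 1) : i < 2 * onesPref s i := by
  have := hD.2 i h1 h2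
  omega

/-- suffixes of lengths 1..n have at most half ones. -/
lemma dyck_suff {n : ℕ} {s : Fin n → Bool} (hD : IsDyck s) {i : ℕ}
    (h1 : 1 ≤ i) (h2 : i ≤ n) : 2 * onesSuff s i ≤ i := by
  have hadd := onesSuff_add s i
  have htop : onesPref s n = n / 2 := hD.1
  rcases Nat.eq_or_lt_of_le h2 with h | h
  · subst h
    rw [Nat.sub_self, onesPref_zero] at hadd
    omega
  · have h1' : 1 ≤ n - i := by omega
    have h2' : n - i ≤ n - 1 := by omega
    have := hD.2 (n - i) h1' h2'
    omega

def Fb (i : ℕ) (M : Multiset (ℕ × ℕ)) : ℕ :=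
  ((M.filter (fun p => p.1 + p.2 = i ∧ p.1 < p.2)).map Prod.snd).sum

def FbHom (i : ℕ) : Multiset (ℕ × ℕ) →+ ℕ where
  toFun := Fb i
  map_zero' := rfl
  map_add' := by
    intro a b
    simp only [Fb, Multiset.filter_add, Multiset.map_add, Multiset.sum_add]

def cardHom' {α : Type*} : Multiset α →+ ℕ where
  toFun := Multiset.card
  map_zero' := rfl
  map_add' := Multiset.card_add

lemma card_finset_sum {α β : Type*} (S : Finset α) (f : α → Multiset β) :
    Multiset.card (∑ x ∈ S, f x) = ∑ x ∈ S, Multiset.card (f x) :=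
  map_sum cardHom' f S

lemma Fb_Mp {n : ℕ} (s : Fin n → Bool) (hD : IsDyck s) {i : ℕ}
    (h1 : 1 ≤ i) (h2 : i ≤ n - 1) : Fb i (Mp s) = onesPref s i := by
  unfold Fb Mp
  rw [Multiset.filter_map, Multiset.map_map, ← Finset.range_val, ← Finset.filter_val]
  rw [show ∀ (F : Finset ℕ) (g : ℕ → ℕ), (F.val.map g).sum = ∑ j ∈ F, g j from
    fun F g => rfl]
  rw [Finset.sum_filter]
  have hstep : ∀ j ∈ Finset.range n,
      (if ((fun p : ℕ × ℕ => p.1 + p.2 = i ∧ p.1 < p.2) ∘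
          (fun j => (j + 1 - onesPref s (j + 1), onesPref s (j + 1)))) j
        then (Prod.snd ∘ (fun j : ℕ => (j + 1 - onesPref s (j + 1), onesPref s (j + 1)))) j
        else 0) = if j = i - 1 then onesPref s i else 0 := by
    intro j hj
    simp only [Function.comp_apply]
    have hple := onesPref_le s (j + 1)
    by_cases hji : j + 1 = i
    · rw [if_pos, if_pos (by omega)]
      · rw [hji]
      · constructor
        · omega
        · have := dyck_pref hD (i := j + 1) (by omega) (by omega)
          omega
    · rw [if_neg, if_neg (by omega)]
      rintro ⟨hsum, -⟩
      omega
  rw [Finset.sum_congr rfl hstep, Finset.sum_ite_eq' (Finset.range n) (i - 1)]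
  rw [if_pos (by simp; omega)]

lemma Fb_Msf {n : ℕ} (s : Fin n → Bool) (hD : IsDyck s) (i : ℕ) :
    Fb i (Msf s) = 0 := by
  unfold Fb
  rw [Multiset.filter_eq_nil.mpr]
  · rfl
  · intro p hp
    unfold Msf at hp
    rw [Multiset.mem_map] at hp
    obtain ⟨j, hj, rfl⟩ := hp
    rw [Multiset.mem_range] at hj
    rintro ⟨-, hlt⟩
    have h1 := dyck_suff hD (i := j + 1) (by omega) (by omega)
    have h2 := onesSuff_le s (j + 1)
    simp only at hlt
    omega

lemma card_Mps {n : ℕ} (s : Fin n → Bool) : Multiset.card (Mps s) = 2 * n := by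
  simp [Mps, Mp, Msf]
  ring

/- ------------------ main theorem ------------------ -/

/-- a B_h sequence all of whose codewords are Dyck paths is an h-MC code. -/
theorem stmt4 (N h : ℕ) (C : Finset (Fin N → Bool))
    (hB : IsBh C h) (hD : ∀ s ∈ C, IsDyck s) :
    ∀ S T : Finset (Fin N → Bool), S ⊆ C → T ⊆ C → S.card ≤ h → T.card ≤ h → S ≠ T →
      (∑ x ∈ S, Mps x) ≠ ∑ x ∈ T, Mps x := by
  intro S T hS hT hScard hTcard hne hM
  apply hne
  apply hB S T hS hT hScard hTcard
  rcases Nat.eq_zero_or_pos N with hN | hN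
  · funext i
    subst hN
    exact i.elim0
  -- cardinalities agree
  have hcard : S.card = T.card := by
    have h1 : Multiset.card (∑ x ∈ S, Mps x) = S.card * (2 * N) := by
      rw [card_finset_sum]
      rw [Finset.sum_congr rfl (fun x _ => card_Mps x), Finset.sum_const, smul_eq_mul]
    have h2 : Multiset.card (∑ x ∈ T, Mps x) = T.card * (2 * N) := by
      rw [card_finset_sum]
      rw [Finset.sum_congr rfl (fun x _ => card_Mps x), Finset.sum_const, smul_eq_mul]
    rw [hM, h2] at h1
    have : 0 < 2 * N := by omega
    exact Nat.eq_of_mul_eq_mul_right this h1.symm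
  -- prefix-count sums agree at every length
  have hP : ∀ i : ℕ, i ≤ N →
      (∑ x ∈ S, onesPref x i) = ∑ x ∈ T, onesPref x i := by
    intro i hi
    rcases Nat.eq_zero_or_pos i with h0 | h0
    · subst h0
      simp [onesPref_zero]
    rcases Nat.eq_or_lt_of_le hi with hiN | hiN
    · subst hiN
      have hSsum : (∑ x ∈ S, onesPref x i) = S.card * (i / 2) := by
        rw [Finset.sum_congr rfl (fun x hx => (hD x (hS hx)).1), Finset.sum_const,
          smul_eq_mul]
      have hTsum : (∑ x ∈ T, onesPref x i) = T.card * (i / 2) := by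
        rw [Finset.sum_congr rfl (fun x hx => (hD x (hT hx)).1), Finset.sum_const,
          smul_eq_mul]
      rw [hSsum, hTsum, hcard]
    · have key : ∀ (U : Finset (Fin N → Bool)), U ⊆ C →
          FbHom i (∑ x ∈ U, Mps x) = ∑ x ∈ U, onesPref x i := by
        intro U hU
        rw [map_sum]
        apply Finset.sum_congr rfl
        intro x hx
        have hDx := hD x (hU hx)
        show Fb i (Mps x) = onesPref x i
        have : Fb i (Mps x) = Fb i (Mp x) + Fb i (Msf x) := by
          simp [Mps, Fb, Multiset.filter_add]
        rw [this, Fb_Mp x hDx h0 (by omega), Fb_Msf x hDx]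
        omega
      rw [← key S hS, ← key T hT, hM]
  -- conclude coordinatewise sums agree
  funext i
  show (∑ x ∈ S, if x i then (1:ℕ) else 0) = ∑ x ∈ T, if x i then (1:ℕ) else 0
  have hi1 : (i : ℕ) + 1 ≤ N := i.2
  have hstep : ∀ (U : Finset (Fin N → Bool)),
      (∑ x ∈ U, onesPref x ((i : ℕ) + 1)) =
        (∑ x ∈ U, onesPref x (i : ℕ)) + ∑ x ∈ U, (if x i then 1 else 0) := by
    intro U
    rw [← Finset.sum_add_distrib]
    apply Finset.sum_congr rfl
    intro x _
    rw [onesPref_succ x (i : ℕ) i.2]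
  have e1 := hstep S
  have e2 := hstep T
  have e3 := hP ((i : ℕ) + 1) hi1
  have e4 := hP (i : ℕ) (le_of_lt (lt_of_lt_of_le (Nat.lt_succ_self _) hi1))
  have e5 : (∑ x ∈ S, onesPref x (i : ℕ)) + (∑ x ∈ S, if x i then (1:ℕ) else 0) =
      (∑ x ∈ T, onesPref x (i : ℕ)) + ∑ x ∈ T, if x i then (1:ℕ) else 0 := by
    rw [← e1, ← e2]; exact e3
  rw [e4] at e5
  exact Nat.add_left_cancel e5
end

section
/- Let C ⊆ {0,1}^n be a 2-prefix code, m ∈ [n], A_w the set of length-m prefixes of codewords having weight w, and for a ∈ A_w let B_a = {b ∈ {0,1}^{n−m} : ab ∈ C}. Then |C_w| = Σ_{a∈A_w} |B_a| ≤ 2^{n−m} + Σ_{unordered pairs {a,a'} ⊆ A_w} |B_a ∩ B_{a'}| ≤ 2^{n−m} + binom(|A_w|, 2), where C_w = {ab ∈ C : a ∈ A_w}. -/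
open Finset

def twoPrefix {n : ℕ} (C : Finset (Fin n → Bool)) : Prop :=
  ∀ S T : Finset (Fin n → Bool), S ⊆ C → T ⊆ C → S.card ≤ 2 → T.card ≤ 2 → S ≠ T →
    (∑ x ∈ S, Mp x) ≠ ∑ x ∈ T, Mp x

/-- B_a = { b : ab ∈ C }. -/
def BaC {m k : ℕ} (C : Finset (Fin (m + k) → Bool)) (a : Fin m → Bool) :
    Finset (Fin k → Bool) :=
  Finset.univ.filter (fun b => Fin.append a b ∈ C)

/-- A_w: length-m prefixes of codewords having weight w. -/
def AwC {m k : ℕ} (C : Finset (Fin (m + k) → Bool)) (w : ℕ) : Finset (Fin m → Bool) :=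
  Finset.univ.filter (fun a => (∃ b, Fin.append a b ∈ C) ∧ wtB a = w)

/-- C_w: codewords whose length-m prefix has weight w. -/
def CwC {m k : ℕ} (C : Finset (Fin (m + k) → Bool)) (w : ℕ) :
    Finset (Fin (m + k) → Bool) :=
  C.filter (fun x => wtB (fun i : Fin m => x (Fin.castAdd k i)) = w)

lemma onesPref_eq {n : ℕ} (s : Fin n → Bool) (i : ℕ) :
    onesPref s i = ∑ j : Fin n, if (j : ℕ) < i then (if s j then 1 else 0) else 0 := by
  rw [onesPref, Finset.sum_filter]

lemma onesPref_append_left {m k : ℕ} (a : Fin m → Bool) (b : Fin k → Bool) (i : ℕ)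
    (hi : i ≤ m) : onesPref (Fin.append a b) i = onesPref a i := by
  rw [onesPref_eq, onesPref_eq, Fin.sum_univ_add]
  have h2 : ∑ j : Fin k, (if ((Fin.natAdd m j : Fin (m+k)) : ℕ) < i then
      (if Fin.append a b (Fin.natAdd m j) then 1 else 0) else 0) = 0 := by
    apply Finset.sum_eq_zero
    intro j _
    have : ¬ ((Fin.natAdd m j : Fin (m+k)) : ℕ) < i := by
      simp only [Fin.coe_natAdd]; omega
    rw [if_neg this]
  rw [h2, add_zero]
  apply Finset.sum_congr rfl
  intro j _
  simp [Fin.append_left]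

lemma onesPref_append_right {m k : ℕ} (a : Fin m → Bool) (b : Fin k → Bool) (t : ℕ) :
    onesPref (Fin.append a b) (m + t) = wtB a + onesPref b t := by
  rw [onesPref_eq, onesPref_eq, Fin.sum_univ_add, wtB]
  congr 1
  · apply Finset.sum_congr rfl
    intro j _
    have : ((Fin.castAdd k j : Fin (m+k)) : ℕ) < m + t := by
      have := j.isLt; simp only [Fin.coe_castAdd]; omega
    rw [if_pos this, Fin.append_left]
  · apply Finset.sum_congr rfl
    intro j _
    have : (((Fin.natAdd m j : Fin (m+k)) : ℕ) < m + t) ↔ ((j : ℕ) < t) := by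
      simp only [Fin.coe_natAdd]; omega
    rw [if_congr this rfl rfl, Fin.append_right]

def sufG (m : ℕ) {k : ℕ} (w : ℕ) (b : Fin k → Bool) : Multiset (ℕ × ℕ) :=
  (Multiset.range k).map
    (fun i => (m + (i + 1) - (w + onesPref b (i + 1)), w + onesPref b (i + 1)))

lemma Mp_append {m k : ℕ} (a : Fin m → Bool) (b : Fin k → Bool) :
    Mp (Fin.append a b) = Mp a + sufG m (wtB a) b := by
  rw [Mp, Multiset.range_add, Multiset.map_add, Multiset.map_map]
  congr 1
  · apply Multiset.map_congr rfl
    intro i hi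
    rw [Multiset.mem_range] at hi
    rw [onesPref_append_left a b (i+1) (by omega)]
  · apply Multiset.map_congr rfl
    intro i hi
    simp only [Function.comp]
    rw [show m + i + 1 = m + (i + 1) by omega, onesPref_append_right]

lemma Mp_swap {m k : ℕ} (a a' : Fin m → Bool) (b b' : Fin k → Bool)
    (h : wtB a = wtB a') :
    Mp (Fin.append a b) + Mp (Fin.append a' b') =
      Mp (Fin.append a b') + Mp (Fin.append a' b) := by
  rw [Mp_append, Mp_append, Mp_append, Mp_append, h]
  abel

lemma append_inj {m k : ℕ} {a a' : Fin m → Bool} {b b' : Fin k → Bool}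
    (h : Fin.append a b = Fin.append a' b') : a = a' ∧ b = b' := by
  constructor
  · funext i
    have := congrFun h (Fin.castAdd k i)
    rwa [Fin.append_left, Fin.append_left] at this
  · funext i
    have := congrFun h (Fin.natAdd m i)
    rwa [Fin.append_right, Fin.append_right] at this

lemma inter_card_le_one {m k : ℕ} (C : Finset (Fin (m + k) → Bool)) (hC : twoPrefix C)
    {a a' : Fin m → Bool} (hne : a ≠ a') (hw : wtB a = wtB a') :
    (BaC C a ∩ BaC C a').card ≤ 1 := by
  by_contra h
  push_neg at h
  obtain ⟨b, hb, b', hb', hbb⟩ := Finset.one_lt_card.mp h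
  simp only [BaC, Finset.mem_inter, Finset.mem_filter, Finset.mem_univ, true_and] at hb hb'
  refine hC {Fin.append a b, Fin.append a' b'} {Fin.append a b', Fin.append a' b}
    ?_ ?_ ?_ ?_ ?_ ?_
  · intro x hx
    rcases Finset.mem_insert.mp hx with h1 | h1
    · exact h1 ▸ hb.1
    · exact (Finset.mem_singleton.mp h1) ▸ hb'.2
  · intro x hx
    rcases Finset.mem_insert.mp hx with h1 | h1
    · exact h1 ▸ hb'.1
    · exact (Finset.mem_singleton.mp h1) ▸ hb.2
  · exact Finset.card_insert_le _ _ |>.trans (by simp)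
  · exact Finset.card_insert_le _ _ |>.trans (by simp)
  · intro hST
    have : Fin.append a b ∈ ({Fin.append a b', Fin.append a' b} :
        Finset (Fin (m+k) → Bool)) := by
      rw [← hST]; exact Finset.mem_insert_self _ _
    rcases Finset.mem_insert.mp this with h1 | h1
    · exact hbb (append_inj h1).2
    · exact hne (append_inj (Finset.mem_singleton.mp h1)).1
  · have h1 : Fin.append a b ≠ Fin.append a' b' := fun h => hne (append_inj h).1
    have h2 : Fin.append a b' ≠ Fin.append a' b := fun h => hne (append_inj h).1
    rw [Finset.sum_pair h1, Finset.sum_pair h2]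
    exact Mp_swap a a' b b' hw


lemma nat_le_choose (d : ℕ) : d ≤ 1 + d.choose 2 := by
  induction d with
  | zero => simp
  | succ d ih =>
    rw [Nat.choose_succ_succ, Nat.choose_one_right] at *
    omega

lemma CwC_eq_biUnion {m k : ℕ} (C : Finset (Fin (m + k) → Bool)) (w : ℕ) :
    CwC C w = (AwC C w).biUnion (fun a => (BaC C a).image (Fin.append a)) := by
  ext x
  simp only [CwC, AwC, BaC, Finset.mem_biUnion, Finset.mem_filter, Finset.mem_univ,
    true_and, Finset.mem_image]
  constructor
  · rintro ⟨hxC, hxw⟩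
    refine ⟨fun i => x (Fin.castAdd k i), ⟨⟨fun i => x (Fin.natAdd m i), ?_⟩, hxw⟩,
      fun i => x (Fin.natAdd m i), ?_, ?_⟩ <;>
      rw [Fin.append_castAdd_natAdd] <;> first | exact hxC | rfl
  · rintro ⟨a, ⟨_, haw⟩, b, hb, rfl⟩
    refine ⟨hb, ?_⟩
    have : (fun i : Fin m => Fin.append a b (Fin.castAdd k i)) = a := by
      funext i; rw [Fin.append_left]
    rw [this, haw]

lemma card_CwC {m k : ℕ} (C : Finset (Fin (m + k) → Bool)) (w : ℕ) :
    (CwC C w).card = ∑ a ∈ AwC C w, (BaC C a).card := by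
  rw [CwC_eq_biUnion, Finset.card_biUnion]
  · apply Finset.sum_congr rfl
    intro a _
    apply Finset.card_image_of_injective
    intro b b' h
    exact (append_inj h).2
  · intro a _ a' _ hne
    apply Finset.disjoint_left.mpr
    rintro x hx hx'
    obtain ⟨b, _, rfl⟩ := Finset.mem_image.mp hx
    obtain ⟨b', _, h⟩ := Finset.mem_image.mp hx'
    exact hne (append_inj h.symm).1

/-- |C_w| = Σ_{a∈A_w} |B_a| ≤ 2^{n−m} + Σ_{{a,a'}⊆A_w} |B_a ∩ B_{a'}|
≤ 2^{n−m} + C(|A_w|, 2). -/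
theorem stmt18 (m k : ℕ) (C : Finset (Fin (m + k) → Bool)) (hC : twoPrefix C) (w : ℕ) :
    (CwC C w).card = (∑ a ∈ AwC C w, (BaC C a).card) ∧
    (CwC C w).card ≤ 2 ^ k + ∑ P ∈ (AwC C w).powersetCard 2,
      (Finset.univ.filter (fun b : Fin k → Bool => ∀ a ∈ P, Fin.append a b ∈ C)).card ∧
    (CwC C w).card ≤ 2 ^ k + ((AwC C w).card).choose 2 := by
  classical
  set A := AwC C w with hA
  have hcard := card_CwC C w
  have hsum : ∑ a ∈ A, (BaC C a).card =
      ∑ b : Fin k → Bool, (A.filter (fun a => Fin.append a b ∈ C)).card := by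
    simp only [BaC, Finset.card_filter]
    rw [Finset.sum_comm]
  have hPsum : ∑ P ∈ A.powersetCard 2,
      (Finset.univ.filter (fun b : Fin k → Bool => ∀ a ∈ P, Fin.append a b ∈ C)).card =
      ∑ b : Fin k → Bool, ((A.filter (fun a => Fin.append a b ∈ C)).card).choose 2 := by
    simp only [Finset.card_filter]
    rw [Finset.sum_comm]
    apply Finset.sum_congr rfl
    intro b _
    rw [← Finset.card_filter]
    have : (A.powersetCard 2).filter (fun P => ∀ a ∈ P, Fin.append a b ∈ C) =
        (A.filter (fun a => Fin.append a b ∈ C)).powersetCard 2 := by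
      ext P
      simp only [Finset.mem_filter, Finset.mem_powersetCard, Finset.subset_iff,
        Finset.mem_filter]
      constructor
      · rintro ⟨⟨hPA, hP2⟩, hall⟩
        exact ⟨fun x hx => ⟨hPA hx, hall x hx⟩, hP2⟩
      · rintro ⟨hsub, hP2⟩
        exact ⟨⟨fun x hx => (hsub hx).1, hP2⟩, fun x hx => (hsub hx).2⟩
    rw [this, Finset.card_powersetCard, Finset.card_filter]
  have h2k : (2 : ℕ) ^ k = ∑ _b : Fin k → Bool, 1 := by
    simp [Finset.card_univ]
  have h2 : (CwC C w).card ≤ 2 ^ k + ∑ P ∈ A.powersetCard 2,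
      (Finset.univ.filter (fun b : Fin k → Bool => ∀ a ∈ P, Fin.append a b ∈ C)).card := by
    rw [hcard, hsum, hPsum, h2k, ← Finset.sum_add_distrib]
    exact Finset.sum_le_sum (fun b _ => nat_le_choose _)
  refine ⟨hcard, h2, le_trans h2 ?_⟩
  gcongr 2 ^ k + ?_
  calc ∑ P ∈ A.powersetCard 2,
      (Finset.univ.filter (fun b : Fin k → Bool => ∀ a ∈ P, Fin.append a b ∈ C)).card
      ≤ ∑ _P ∈ A.powersetCard 2, 1 := by
        apply Finset.sum_le_sum
        intro P hP
        rw [Finset.mem_powersetCard] at hP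
        obtain ⟨a, a', hne, rfl⟩ := Finset.card_eq_two.mp hP.2
        have ha : a ∈ A := hP.1 (by simp)
        have ha' : a' ∈ A := hP.1 (by simp)
        rw [hA, AwC, Finset.mem_filter] at ha ha'
        have hfe : Finset.univ.filter
            (fun b : Fin k → Bool => ∀ x ∈ ({a, a'} : Finset (Fin m → Bool)),
              Fin.append x b ∈ C) = BaC C a ∩ BaC C a' := by
          ext b
          simp [BaC, Finset.mem_insert]
        rw [hfe]
        exact inter_card_le_one C hC hne (ha.2.2.trans ha'.2.2.symm)
    _ = A.card.choose 2 := by rw [Finset.sum_const, smul_eq_mul, mul_one,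
        Finset.card_powersetCard]
end
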